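/- Let P be a path of π and let e_1, e_2, …, e_k be all the elements of P whose extended rank is defined, listed in the order in which they appear on the path (from start to end). Then the sequence of their extended ranks is strictly decreasing. -/

import Mathlib

/-- The `b`-local minima of a path, represented as the list of values (in path order):
a position is kept iff its value is smaller than all values at distance at most `b` in the
list, comparisons with out-of-range (undefined) positions being disregarded. -/
def pmins (b : ℕ) (l : List ℕ) : List ℕ :=
  (List.range l.length).filterMap fun p =>
    if ∀ q ∈ List.range l.length, q ≠ p → p ≤ q + b → q ≤ p + b → l.getD p 0 < l.getD q 0
    then some (l.getD p 0) else none

/-- `plevel b l r` is the list of elements of `E_{r+1}` of the path `l` (0-indexed: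
`plevel b l 0 = l` is `E_1`), in path order. -/
def plevel (b : ℕ) (l : List ℕ) : ℕ → List ℕ
  | 0 => l
  | r + 1 => pmins b (plevel b l r)

/-- Advance `s` steps along the (level) list `l` from the element with value `v`;
`none` if undefined (i.e. `v ∉ l` or the advance would run past the end of the path). -/
def padv (s : ℕ) (l : List ℕ) (v : ℕ) : Option ℕ :=
  if v ∈ l ∧ l.idxOf v + s < l.length then some (l.getD (l.idxOf v + s) 0) else none

/-- Retreat `s` steps along the (level) list `l` from the element with value `v`;
`none` if undefined. -/
def pret (s : ℕ) (l : List ℕ) (v : ℕ) : Option ℕ :=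
  if v ∈ l ∧ s ≤ l.idxOf v then some (l.getD (l.idxOf v - s) 0) else none

/-- `iSeqP b l i k` is the element `i_{k+1}` of the (tentative) `b`-staircase from `i` on the
path `l`: `i_1 = i` and `i_{k+1} = π_k^b(i_k)`; `none` if undefined. -/
def iSeqP (b : ℕ) (l : List ℕ) (i : ℕ) : ℕ → Option ℕ
  | 0 => if i ∈ l then some i else none
  | k + 1 => (iSeqP b l i k).bind (padv b (plevel b l k))

/-- `jSeqP b l r m q` is the element `j_{r+1-q}` of the descending part of the `b`-staircase of
size `r` with middle `m` on the path `l`: `j_{r+1} = m` and `j_k = π_k^b(j_{k+1})`. -/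
def jSeqP (b : ℕ) (l : List ℕ) (r m : ℕ) : ℕ → Option ℕ
  | 0 => some m
  | q + 1 => (jSeqP b l r m q).bind (padv b (plevel b l (r - (q + 1))))

/-- There is a `b`-staircase of size `r` from `i` on the path `l`. -/
def IsStaircaseP (b : ℕ) (l : List ℕ) (r i : ℕ) : Prop :=
  ∃ m, iSeqP b l i r = some m ∧ m ∈ plevel b l r ∧ (jSeqP b l r m r).isSome

/-- There is an almost `b`-staircase of size `r` from `i` on the path `l`
(membership in `E_k` required only for `k ∈ [r]`). -/
def IsAlmostP (b : ℕ) (l : List ℕ) (r i : ℕ) : Prop :=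
  ∃ m, iSeqP b l i r = some m ∧ (jSeqP b l r m r).isSome

/-- The `b`-staircase of size `r` from `i` is the best one: on a path every almost
`b`-staircase is proper, so `i` has no almost `b`-staircase of size `r+1`. -/
def IsBestP (b : ℕ) (l : List ℕ) (r i : ℕ) : Prop :=
  IsStaircaseP b l r i ∧ ¬ IsAlmostP b l (r + 1) i

/-- There is a half `b`-staircase of size `r` from `i` on the path `l`:
`i_1 = i, …, i_{r+1} = m = j_r, j_{r-1}, …, j_1`. -/
def IsHalfP (b : ℕ) (l : List ℕ) (r i : ℕ) : Prop :=
  ∃ m, iSeqP b l i r = some m ∧ (jSeqP b l (r - 1) m (r - 1)).isSome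

/-- `ExtRank b l i v` says that the extended rank of `i` on the path `l` is `(t, h)`,
encoded (lexicographically faithfully) as the natural number `v = 2t + h`, where `t` is the
rank of `i` (the size of the best staircase from `i`) and `h` records whether a half staircase
of size `t+1` from `i` exists. -/
def ExtRank (b : ℕ) (l : List ℕ) (i v : ℕ) : Prop :=
  ∃ t, IsBestP b l t i ∧
    ((IsHalfP b l (t + 1) i ∧ v = 2 * t + 1) ∨ (¬ IsHalfP b l (t + 1) i ∧ v = 2 * t))

/-- `len(u,w) = min{k > 0 : π^k(u) = w}` (0 if unreachable). -/
noncomputable def lenTo {n : ℕ} (π : Equiv.Perm (Fin n)) (u w : Fin n) : ℕ :=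
  letI := Classical.propDecidable
  if h : ∃ k, 0 < k ∧ (⇑π)^[k] u = w then Nat.find h else 0

/-- The path obtained from the cycle of `π` containing `x` by cutting before `π(x)`
(i.e. setting `π(x) := ⊥`), as the list of its elements (values) in path order:
it starts at `π(x)` and ends at `x`. -/
noncomputable def pathOf {n : ℕ} (π : Equiv.Perm (Fin n)) (x : Fin n) : List ℕ :=
  (List.range (lenTo π x x)).map fun j => ((⇑π)^[j + 1] x).val

namespace SP

open List

lemma filterMap_sublist_map {f : ℕ → Option ℕ} {g : ℕ → ℕ}
    (h : ∀ p y, f p = some y → y = g p) : ∀ L : List ℕ, L.filterMap f <+ L.map g := by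
  intro L
  induction L with
  | nil => simp
  | cons a L ih =>
    rw [List.filterMap_cons, List.map_cons]
    cases hfa : f a with
    | none => exact ih.cons _
    | some y => rw [h a y hfa]; exact ih.cons₂ _

lemma map_getD_range (l : List ℕ) :
    (List.range l.length).map (fun p => l.getD p 0) = l := by
  apply List.ext_getElem (by simp)
  intro i h1 h2
  simp [List.getD_eq_getElem _ _ h2, List.getElem?_eq_getElem h2]

lemma pmins_sublist (b : ℕ) (L : List ℕ) : pmins b L <+ L := by
  unfold pmins
  have h := filterMap_sublist_map
    (f := fun p => if ∀ q ∈ List.range L.length, q ≠ p → p ≤ q + b → q ≤ p + b →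
        L.getD p 0 < L.getD q 0 then some (L.getD p 0) else none)
    (g := fun p => L.getD p 0) ?_ (List.range L.length)
  · rw [map_getD_range] at h; exact h
  · intro p y hy
    by_cases hc : ∀ q ∈ List.range L.length, q ≠ p → p ≤ q + b → q ≤ p + b →
        L.getD p 0 < L.getD q 0
    · rw [if_pos hc] at hy; exact (Option.some.inj hy).symm
    · rw [if_neg hc] at hy; exact absurd hy (by simp)

lemma plevel_sublist (b : ℕ) (l : List ℕ) (r : ℕ) :
    plevel b l (r + 1) <+ plevel b l r := pmins_sublist b _

lemma plevel_sublist_self (b : ℕ) (l : List ℕ) : ∀ r, plevel b l r <+ l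
  | 0 => List.Sublist.refl l
  | r + 1 => (plevel_sublist b l r).trans (plevel_sublist_self b l r)

lemma sub_idx_lt {s t : List ℕ} (h : s <+ t) (ht : t.Nodup) :
    ∀ {u w : ℕ}, u ∈ s → w ∈ s → s.idxOf u < s.idxOf w →
      t.idxOf u < t.idxOf w := by
  induction h with
  | slnil => intro u w hu _ _; exact absurd hu (by simp)
  | @cons s t a h ih =>
    intro u w hu hw hlt
    obtain ⟨hat, htn⟩ := List.nodup_cons.1 ht
    have hu' : u ∈ t := h.subset hu
    have hw' : w ∈ t := h.subset hw
    rw [List.idxOf_cons_ne _ (fun hh => hat (by rw [hh]; exact hu')),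
        List.idxOf_cons_ne _ (fun hh => hat (by rw [hh]; exact hw'))]
    exact Nat.succ_lt_succ (ih htn hu hw hlt)
  | @cons_cons s t a h ih =>
    intro u w hu hw hlt
    obtain ⟨hat, htn⟩ := List.nodup_cons.1 ht
    by_cases hua : a = u
    · subst hua
      by_cases hwa : a = w
      · subst hwa; exact absurd hlt (lt_irrefl _)
      · have hw' : w ∈ s := by
          rcases List.mem_cons.1 hw with h1 | h1
          · exact absurd h1.symm hwa
          · exact h1
        rw [List.idxOf_cons_self, List.idxOf_cons_ne _ hwa]
        exact Nat.succ_pos _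
    · by_cases hwa : a = w
      · subst hwa
        rw [List.idxOf_cons_self] at hlt
        exact absurd hlt (Nat.not_lt_zero _)
      · have hu' : u ∈ s := by
          rcases List.mem_cons.1 hu with h1 | h1
          · exact absurd h1.symm hua
          · exact h1
        have hw' : w ∈ s := by
          rcases List.mem_cons.1 hw with h1 | h1
          · exact absurd h1.symm hwa
          · exact h1
        rw [List.idxOf_cons_ne _ hua, List.idxOf_cons_ne _ hwa] at hlt
        rw [List.idxOf_cons_ne _ hua, List.idxOf_cons_ne _ hwa]
        exact Nat.succ_lt_succ (ih htn hu' hw' (Nat.lt_of_succ_lt_succ hlt))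

lemma sub_idx_lt_iff {s t : List ℕ} (h : s <+ t) (ht : t.Nodup)
    {u w : ℕ} (hu : u ∈ s) (hw : w ∈ s) :
    s.idxOf u < s.idxOf w ↔ t.idxOf u < t.idxOf w := by
  constructor
  · exact sub_idx_lt h ht hu hw
  · intro hlt
    rcases eq_or_ne u w with rfl | hne
    · exact absurd hlt (lt_irrefl _)
    rcases Nat.lt_trichotomy (s.idxOf u) (s.idxOf w) with h1 | h1 | h1
    · exact h1
    · exfalso
      have hsn : s.Nodup := h.nodup ht
      have h2 : s[s.idxOf u]'(List.idxOf_lt_length_iff.2 hu) =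
          s[s.idxOf w]'(List.idxOf_lt_length_iff.2 hw) := by
        congr 1
      rw [List.getElem_idxOf, List.getElem_idxOf] at h2
      exact hne h2
    · exact absurd (sub_idx_lt h ht hw hu h1) (Nat.lt_asymm hlt)

lemma sub_idx_le_iff {s t : List ℕ} (h : s <+ t) (ht : t.Nodup)
    {u w : ℕ} (hu : u ∈ s) (hw : w ∈ s) :
    s.idxOf u ≤ s.idxOf w ↔ t.idxOf u ≤ t.idxOf w := by
  rw [← Nat.not_lt, ← Nat.not_lt, not_iff_not]
  exact sub_idx_lt_iff h ht hw hu

end SP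
namespace SP

open List

lemma plevel_nodup {l : List ℕ} (hl : l.Nodup) (r : ℕ) : (plevel 1 l r).Nodup :=
  (plevel_sublist_self 1 l r).nodup hl

lemma lev_idx_lt_iff {l : List ℕ} (hl : l.Nodup) (r : ℕ) {u w : ℕ}
    (hu : u ∈ plevel 1 l r) (hw : w ∈ plevel 1 l r) :
    (plevel 1 l r).idxOf u < (plevel 1 l r).idxOf w ↔ l.idxOf u < l.idxOf w :=
  sub_idx_lt_iff (plevel_sublist_self 1 l r) hl hu hw

lemma lev_idx_le_iff {l : List ℕ} (hl : l.Nodup) (r : ℕ) {u w : ℕ}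
    (hu : u ∈ plevel 1 l r) (hw : w ∈ plevel 1 l r) :
    (plevel 1 l r).idxOf u ≤ (plevel 1 l r).idxOf w ↔ l.idxOf u ≤ l.idxOf w :=
  sub_idx_le_iff (plevel_sublist_self 1 l r) hl hu hw

lemma padv_cases {L : List ℕ} {v w : ℕ} (h : padv 1 L v = some w) :
    v ∈ L ∧ ∃ hlt : L.idxOf v + 1 < L.length, w = L[L.idxOf v + 1] := by
  unfold padv at h
  split at h
  · next hc =>
    refine ⟨hc.1, hc.2, ?_⟩
    rw [← Option.some.inj h, List.getD_eq_getElem _ _ hc.2]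
  · exact absurd h (by simp)

lemma padv_intro {L : List ℕ} {v : ℕ} (hv : v ∈ L) (hlt : L.idxOf v + 1 < L.length) :
    padv 1 L v = some (L[L.idxOf v + 1]) := by
  unfold padv
  rw [if_pos ⟨hv, hlt⟩, List.getD_eq_getElem _ _ hlt]

/-- weak/strict monotone transfer of `padv` definedness. -/
lemma padv_mono {L : List ℕ} (hL : L.Nodup) {u w w₁ : ℕ} (hu : u ∈ L)
    (hw₁ : padv 1 L w = some w₁) (hle : L.idxOf u ≤ L.idxOf w) :
    ∃ u₁, padv 1 L u = some u₁ ∧ u₁ ∈ L ∧ L.idxOf u₁ ≤ L.idxOf w₁ ∧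
      (L.idxOf u < L.idxOf w → L.idxOf u₁ < L.idxOf w₁) := by
  obtain ⟨hwL, hwlt, rfl⟩ := padv_cases hw₁
  have hult : L.idxOf u + 1 < L.length := by omega
  refine ⟨L[L.idxOf u + 1], padv_intro hu hult, List.getElem_mem _, ?_, ?_⟩ <;>
    rw [List.Nodup.idxOf_getElem hL _ hult, List.Nodup.idxOf_getElem hL _ hwlt] <;> omega

/-- `padv` is defined at `u` whenever some member of `L` lies strictly after `u`. -/
lemma padv_of_lt {L : List ℕ} (hL : L.Nodup) {u w : ℕ} (hu : u ∈ L) (hw : w ∈ L)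
    (hlt : L.idxOf u < L.idxOf w) :
    ∃ u₁, padv 1 L u = some u₁ ∧ u₁ ∈ L ∧ L.idxOf u₁ ≤ L.idxOf w := by
  have hwlt : L.idxOf w < L.length := List.idxOf_lt_length_iff.2 hw
  have hult : L.idxOf u + 1 < L.length := by omega
  refine ⟨L[L.idxOf u + 1], padv_intro hu hult, List.getElem_mem _, ?_⟩
  rw [List.Nodup.idxOf_getElem hL _ hult]
  omega

lemma iSeq_succ_elim {l : List ℕ} {i k a : ℕ} (h : iSeqP 1 l i (k + 1) = some a) :
    ∃ y, iSeqP 1 l i k = some y ∧ padv 1 (plevel 1 l k) y = some a := by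
  have : iSeqP 1 l i (k + 1) = (iSeqP 1 l i k).bind (padv 1 (plevel 1 l k)) := rfl
  rw [this] at h
  cases hy : iSeqP 1 l i k with
  | none => rw [hy] at h; exact absurd h (by simp)
  | some y => rw [hy] at h; exact ⟨y, rfl, h⟩

lemma iSeq_succ_intro {l : List ℕ} {i k y a : ℕ} (hy : iSeqP 1 l i k = some y)
    (ha : padv 1 (plevel 1 l k) y = some a) : iSeqP 1 l i (k + 1) = some a := by
  have : iSeqP 1 l i (k + 1) = (iSeqP 1 l i k).bind (padv 1 (plevel 1 l k)) := rfl
  rw [this, hy]; exact ha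

/-- strict monotonicity of the ascending sequence w.r.t. the start. -/
lemma iSeq_strict_mono {l : List ℕ} (hl : l.Nodup) :
    ∀ (k : ℕ) {u w a a' : ℕ}, l.idxOf u < l.idxOf w →
      iSeqP 1 l u k = some a → iSeqP 1 l w k = some a' →
      l.idxOf a < l.idxOf a' := by
  intro k
  induction k with
  | zero =>
    intro u w a a' hlt ha ha'
    unfold iSeqP at ha ha'
    split at ha
    · split at ha'
      · rw [← Option.some.inj ha, ← Option.some.inj ha']; exact hlt
      · exact absurd ha' (by simp)
    · exact absurd ha (by simp)
  | succ k ih =>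
    intro u w a a' hlt ha ha'
    obtain ⟨y, hy, hya⟩ := iSeq_succ_elim ha
    obtain ⟨y', hy', hya'⟩ := iSeq_succ_elim ha'
    have hyy : l.idxOf y < l.idxOf y' := ih hlt hy hy'
    have hyl : y ∈ plevel 1 l k := (padv_cases hya).1
    have hyl' : y' ∈ plevel 1 l k := (padv_cases hya').1
    have hlev : (plevel 1 l k).idxOf y < (plevel 1 l k).idxOf y' :=
      (lev_idx_lt_iff hl k hyl hyl').2 hyy
    obtain ⟨u₁, hu₁, hu₁m, _, hstr⟩ :=
      padv_mono (plevel_nodup hl k) hyl hya' (le_of_lt hlev)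
    rw [hu₁] at hya
    have ha1 : u₁ = a := Option.some.inj hya
    subst ha1
    have ham : a' ∈ plevel 1 l k := by
      obtain ⟨_, hx, rfl⟩ := padv_cases hya'
      exact List.getElem_mem _
    exact (lev_idx_lt_iff hl k hu₁m ham).1 (hstr hlev)

end SP
namespace SP

open List

lemma jSeq_succ (l : List ℕ) (r m : ℕ) : ∀ q : ℕ,
    jSeqP 1 l (r + 1) m (q + 1) =
      (padv 1 (plevel 1 l r) m).bind (fun m₁ => jSeqP 1 l r m₁ q) := by
  intro q
  induction q with
  | zero =>
    show (jSeqP 1 l (r + 1) m 0).bind (padv 1 (plevel 1 l (r + 1 - 1))) = _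
    have h1 : r + 1 - 1 = r := by omega
    rw [h1]
    show (padv 1 (plevel 1 l r) m) = _
    cases padv 1 (plevel 1 l r) m <;> rfl
  | succ q ih =>
    show (jSeqP 1 l (r + 1) m (q + 1)).bind (padv 1 (plevel 1 l (r + 1 - (q + 2)))) = _
    rw [ih, Option.bind_assoc]
    have h1 : r + 1 - (q + 2) = r - (q + 1) := by omega
    rw [h1]
    rfl

/-- Descent domination lemma: definedness of the full descent transfers leftwards. -/
lemma jSeq_mono {l : List ℕ} (hl : l.Nodup) :
    ∀ (r : ℕ) {u w : ℕ}, u ∈ plevel 1 l r → l.idxOf u ≤ l.idxOf w →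
      (jSeqP 1 l r w r).isSome → (jSeqP 1 l r u r).isSome := by
  intro r
  induction r with
  | zero => intro u w _ _ _; rfl
  | succ r ih =>
    intro u w hu hle hw
    rw [jSeq_succ] at hw
    obtain ⟨w₁, hw₁, hjw₁⟩ : ∃ w₁, padv 1 (plevel 1 l r) w = some w₁ ∧
        (jSeqP 1 l r w₁ r).isSome := by
      cases hp : padv 1 (plevel 1 l r) w with
      | none => rw [hp] at hw; exact absurd hw (by simp)
      | some w₁ => rw [hp] at hw; exact ⟨w₁, rfl, hw⟩
    have hwm : w ∈ plevel 1 l r := (padv_cases hw₁).1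
    have hum : u ∈ plevel 1 l r := (plevel_sublist 1 l r).subset hu
    have hlev : (plevel 1 l r).idxOf u ≤ (plevel 1 l r).idxOf w :=
      (lev_idx_le_iff hl r hum hwm).2 hle
    obtain ⟨u₁, hu₁, hu₁m, hu₁le, _⟩ := padv_mono (plevel_nodup hl r) hum hw₁ hlev
    have hw₁m : w₁ ∈ plevel 1 l r := by
      obtain ⟨_, hx, rfl⟩ := padv_cases hw₁
      exact List.getElem_mem _
    have hlle : l.idxOf u₁ ≤ l.idxOf w₁ := (lev_idx_le_iff hl r hu₁m hw₁m).1 hu₁le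
    rw [jSeq_succ, hu₁]
    exact ih hu₁m hlle hjw₁

/-- almost staircases truncate: size `r+1` implies size `r`. -/
lemma almost_step {l : List ℕ} (hl : l.Nodup) {i r : ℕ}
    (h : IsAlmostP 1 l (r + 1) i) : IsAlmostP 1 l r i := by
  obtain ⟨z, hz, hjz⟩ := h
  obtain ⟨y, hy, hyz⟩ := iSeq_succ_elim hz
  obtain ⟨hym, hylt, rfl⟩ := padv_cases hyz
  rw [jSeq_succ] at hjz
  set L := plevel 1 l r with hL
  obtain ⟨w₁, hw₁, hjw₁⟩ : ∃ w₁, padv 1 L (L[L.idxOf y + 1]) = some w₁ ∧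
      (jSeqP 1 l r w₁ r).isSome := by
    cases hp : padv 1 L (L[L.idxOf y + 1]) with
    | none => rw [hp] at hjz; exact absurd hjz (by simp)
    | some w₁ => rw [hp] at hjz; exact ⟨w₁, rfl, hjz⟩
  have hw₁m : w₁ ∈ L := by
    obtain ⟨_, hx, rfl⟩ := padv_cases hw₁
    exact List.getElem_mem _
  have hidx : L.idxOf y ≤ L.idxOf w₁ := by
    obtain ⟨_, hx, hw₁e⟩ := padv_cases hw₁
    rw [hw₁e, List.Nodup.idxOf_getElem (plevel_nodup hl r) _ hx]
    rw [List.Nodup.idxOf_getElem (plevel_nodup hl r) _ hylt]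
    omega
  have hlle : l.idxOf y ≤ l.idxOf w₁ := (lev_idx_le_iff hl r hym hw₁m).1 hidx
  exact ⟨y, hy, jSeq_mono hl r hym hlle hjw₁⟩

lemma almost_mono {l : List ℕ} (hl : l.Nodup) {i r s : ℕ} (hrs : s ≤ r)
    (h : IsAlmostP 1 l r i) : IsAlmostP 1 l s i := by
  induction r with
  | zero => rwa [Nat.le_zero.1 hrs]
  | succ r ih =>
    rcases Nat.lt_or_ge s (r + 1) with h1 | h1
    · exact ih (by omega) (almost_step hl h)
    · rwa [le_antisymm hrs h1]

/-- Key transfer lemma: an almost staircase of size `r+1` from a later element `i'`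
yields one from an earlier element `i` whose ascent reaches level `r+1`. -/
lemma almost_transfer {l : List ℕ} (hl : l.Nodup) {i i' r m : ℕ}
    (hii : l.idxOf i < l.idxOf i') (hm : iSeqP 1 l i r = some m)
    (hmem : m ∈ plevel 1 l r) (h : IsAlmostP 1 l (r + 1) i') :
    IsAlmostP 1 l (r + 1) i := by
  obtain ⟨m'', hm'', hjm''⟩ := h
  obtain ⟨y', hy', hym''⟩ := iSeq_succ_elim hm''
  have hy'm : y' ∈ plevel 1 l r := (padv_cases hym'').1
  have hmy : l.idxOf m < l.idxOf y' := iSeq_strict_mono hl r hii hm hy'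
  have hlev : (plevel 1 l r).idxOf m < (plevel 1 l r).idxOf y' :=
    (lev_idx_lt_iff hl r hmem hy'm).2 hmy
  obtain ⟨M, hM, hMm, _, hstr⟩ := padv_mono (plevel_nodup hl r) hmem hym'' (le_of_lt hlev)
  have hMlt : (plevel 1 l r).idxOf M < (plevel 1 l r).idxOf m'' := hstr hlev
  have hm''m : m'' ∈ plevel 1 l r := by
    obtain ⟨_, hx, rfl⟩ := padv_cases hym''
    exact List.getElem_mem _
  -- descent for M
  rw [jSeq_succ] at hjm''
  obtain ⟨w₁, hw₁, hjw₁⟩ : ∃ w₁, padv 1 (plevel 1 l r) m'' = some w₁ ∧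
      (jSeqP 1 l r w₁ r).isSome := by
    cases hp : padv 1 (plevel 1 l r) m'' with
    | none => rw [hp] at hjm''; exact absurd hjm'' (by simp)
    | some w₁ => rw [hp] at hjm''; exact ⟨w₁, rfl, hjm''⟩
  obtain ⟨u₁, hu₁, hu₁m, hu₁le, _⟩ := padv_mono (plevel_nodup hl r) hMm hw₁ (le_of_lt hMlt)
  have hw₁m : w₁ ∈ plevel 1 l r := by
    obtain ⟨_, hx, rfl⟩ := padv_cases hw₁
    exact List.getElem_mem _
  refine ⟨M, iSeq_succ_intro hm hM, ?_⟩
  rw [jSeq_succ, hu₁]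
  exact jSeq_mono hl r hu₁m ((lev_idx_le_iff hl r hu₁m hw₁m).1 hu₁le) hjw₁

end SP
namespace SP

lemma pathOf_nodup {n : ℕ} (π : Equiv.Perm (Fin n)) (x : Fin n) :
    (pathOf π x).Nodup := by
  have hex : ∃ k, 0 < k ∧ (⇑π)^[k] x = x := by
    refine ⟨orderOf π, orderOf_pos π, ?_⟩
    rw [Equiv.Perm.iterate_eq_pow, pow_orderOf_eq_one]
    rfl
  have hlen : ∀ k, k < lenTo π x x → ¬(0 < k ∧ (⇑π)^[k] x = x) := by
    intro k hk
    unfold lenTo at hk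
    rw [dif_pos hex] at hk
    exact @Nat.find_min _ (fun a => Classical.propDecidable _) hex k hk
  unfold pathOf
  apply List.Nodup.map_on _ List.nodup_range
  intro a ha b hb hfe
  rw [List.mem_range] at ha hb
  have hf : (⇑π)^[a + 1] x = (⇑π)^[b + 1] x := Fin.val_injective hfe
  have key : ∀ a b : ℕ, a ≤ b → a < lenTo π x x → b < lenTo π x x →
      (⇑π)^[a + 1] x = (⇑π)^[b + 1] x → a = b := by
    intro a b hab ha hb hf
    by_contra hne
    have hf2 : (⇑π)^[a + 1] ((⇑π)^[b - a] x) = (⇑π)^[b + 1] x := by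
      rw [← Function.iterate_add_apply]
      congr 1
      omega
    have hinj : Function.Injective ((⇑π)^[a + 1]) := Function.Injective.iterate π.injective _
    have h2 : (⇑π)^[b - a] x = x := (hinj (hf.trans hf2.symm)).symm
    exact hlen (b - a) (by omega) ⟨by omega, h2⟩
  rcases Nat.le_total a b with hab | hab
  · exact key a b hab ha hb hf
  · exact (key b a hab hb ha hf.symm).symm

end SP
/-- (Fich et al., `b = 1`.)  Let `P` be a path of `π` and consider the
elements of `P` whose extended rank is defined, in path order.  Then the sequence of their
extended ranks is strictly decreasing: if position `p` precedes position `q` on `P` and both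
carry extended ranks `vp`, `vq` (encoded as `2t + h`, lexicographic order), then `vq < vp`. -/
theorem extended_ranks_strictly_decreasing (n : ℕ) (π : Equiv.Perm (Fin n)) (x : Fin n)
    (P : List ℕ) (hP : P = pathOf π x)
    (p q : ℕ) (hpq : p < q) (hq : q < P.length)
    (vp vq : ℕ) (hvp : ExtRank 1 P (P.getD p 0) vp) (hvq : ExtRank 1 P (P.getD q 0) vq) :
    vq < vp := by
  have hl : P.Nodup := by rw [hP]; exact SP.pathOf_nodup π x
  have hp : p < P.length := hpq.trans hq
  set i := P.getD p 0 with hi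
  set i' := P.getD q 0 with hi'
  have hip : P.idxOf i = p := by
    rw [hi, List.getD_eq_getElem _ _ hp]; exact List.Nodup.idxOf_getElem hl p hp
  have hiq : P.idxOf i' = q := by
    rw [hi', List.getD_eq_getElem _ _ hq]; exact List.Nodup.idxOf_getElem hl q hq
  have hii : P.idxOf i < P.idxOf i' := by rw [hip, hiq]; exact hpq
  obtain ⟨t, ⟨hS, hNA⟩, hcase⟩ := hvp
  obtain ⟨t', ⟨hS', hNA'⟩, hcase'⟩ := hvq
  obtain ⟨m, him, hmem, hjm⟩ := hS
  obtain ⟨m', him', hmem', hjm'⟩ := hS'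
  -- the rank can only decrease: t' ≤ t
  have hts : t' ≤ t := by
    by_contra hcon
    push_neg at hcon
    have hA' : IsAlmostP 1 P t' i' := ⟨m', him', hjm'⟩
    have hA1 : IsAlmostP 1 P (t + 1) i' := SP.almost_mono hl hcon hA'
    exact hNA (SP.almost_transfer hl hii him hmem hA1)
  rcases Nat.lt_or_ge t' t with hlt' | hge'
  · -- strictly smaller rank: done by arithmetic
    rcases hcase with ⟨_, rfl⟩ | ⟨_, rfl⟩ <;> rcases hcase' with ⟨_, rfl⟩ | ⟨_, rfl⟩ <;> omega
  · -- equal ranks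
    have heq : t' = t := le_antisymm hts hge'
    subst heq
    -- `i` has a half staircase of size `t'+1`, using the staircase of size `t'` from `i'`
    have hmm' : P.idxOf m < P.idxOf m' := SP.iSeq_strict_mono hl t' hii him him'
    have hlevmm : (plevel 1 P t').idxOf m < (plevel 1 P t').idxOf m' :=
      (SP.lev_idx_lt_iff hl t' hmem hmem').2 hmm'
    obtain ⟨M, hM, hMm, hMle⟩ := SP.padv_of_lt (SP.plevel_nodup hl t') hmem hmem' hlevmm
    have hiM : iSeqP 1 P i (t' + 1) = some M := SP.iSeq_succ_intro him hM
    have hjM : (jSeqP 1 P t' M t').isSome :=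
      SP.jSeq_mono hl t' hMm ((SP.lev_idx_le_iff hl t' hMm hmem').1 hMle) hjm'
    have hhalf : IsHalfP 1 P (t' + 1) i := by
      refine ⟨M, hiM, ?_⟩
      have h1 : t' + 1 - 1 = t' := by omega
      rw [h1]
      exact hjM
    have hvpeq : vp = 2 * t' + 1 := by
      rcases hcase with ⟨_, h⟩ | ⟨hn, _⟩
      · exact h
      · exact absurd hhalf hn
    -- `i'` cannot have a half staircase of size `t'+1`
    have hnohalf : ¬ IsHalfP 1 P (t' + 1) i' := by
      rintro ⟨m₂, him₂, hj₂⟩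
      obtain ⟨y, hy, hym₂⟩ := SP.iSeq_succ_elim him₂
      have hym' : y = m' := Option.some.inj (hy.symm.trans him')
      subst hym'
      have h1 : t' + 1 - 1 = t' := by omega
      rw [h1] at hj₂
      obtain ⟨u₁, hu₁, hu₁m, hu₁le, _⟩ :=
        SP.padv_mono (SP.plevel_nodup hl t') hMm hym₂ hMle
      have hm₂m : m₂ ∈ plevel 1 P t' := by
        obtain ⟨_, hx, rfl⟩ := SP.padv_cases hym₂
        exact List.getElem_mem _
      have hju₁ : (jSeqP 1 P t' u₁ t').isSome :=
        SP.jSeq_mono hl t' hu₁m ((SP.lev_idx_le_iff hl t' hu₁m hm₂m).1 hu₁le) hj₂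
      apply hNA
      refine ⟨M, hiM, ?_⟩
      rw [SP.jSeq_succ, hu₁]
      exact hju₁
    rcases hcase' with ⟨hh, _⟩ | ⟨_, rfl⟩
    · exact absurd hh hnohalf
    · omega
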